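/- arXiv:2505.23225 — 4 statements merged into one kernel-verified Lean document; each statement's English description precedes it below -/
import Mathlib

section
/- (ε-VCP for Linear Models Under Uniform Perturbation Distribution.) Let n ≥ 1, let u ∈ ℝ^n be a unit vector, and let 0 < γ < ε. Then the ratio of Lebesgue volumes Vol({r ∈ ℝ^n : ‖r‖ ≤ ε and ⟨r, u⟩ ≥ γ}) / Vol({r ∈ ℝ^n : γ ≤ ‖r‖ < ε}) equals (1/2) · ε^n / (ε^n − γ^n) · I(1 − (γ/ε)²; (n+1)/2, 1/2). Equivalently, if a perturbation r is drawn uniformly from the shell {r : γ ≤ ‖r‖ < ε}, the probability that ⟨r, u⟩ ≥ γ equals this quantity. -/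
open RealInnerProductSpace MeasureTheory

/-- The Euler Beta function `B(a, b) = ∫₀¹ t^(a-1) (1-t)^(b-1) dt`. -/
noncomputable def eulerBeta (a b : ℝ) : ℝ :=
  ∫ t in (0 : ℝ)..1, t ^ (a - 1) * (1 - t) ^ (b - 1)

/-- The regularized incomplete Beta function
`I(x; a, b) = (∫₀ˣ t^(a-1) (1-t)^(b-1) dt) / B(a, b)`. -/
noncomputable def regIncBeta (x a b : ℝ) : ℝ :=
  (∫ t in (0 : ℝ)..x, t ^ (a - 1) * (1 - t) ^ (b - 1)) / eulerBeta a b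

open Set Metric intervalIntegral

lemma euclid_norm_le_iff {k : ℕ} {R : ℝ} (hR : 0 ≤ R) (x : EuclideanSpace ℝ (Fin k)) :
    ‖x‖ ≤ R ↔ ∑ i, x i ^ 2 ≤ R ^ 2 := by
  rw [EuclideanSpace.norm_eq, Real.sqrt_le_left hR]
  simp [sq_abs]

lemma pi_slice_vol (k : ℕ) {c : ℝ} (hc : 0 ≤ c) :
    volume {y : Fin k → ℝ | ∑ i, y i ^ 2 ≤ c}
      = ENNReal.ofReal (Real.sqrt c ^ k) *
          volume (closedBall (0 : EuclideanSpace ℝ (Fin k)) 1) := by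
  have hmeas : MeasurableSet {y : Fin k → ℝ | ∑ i, y i ^ 2 ≤ c} := by
    apply measurableSet_le _ measurable_const
    exact Finset.measurable_sum _ fun i _ => (measurable_pi_apply i).pow_const 2
  have h := (EuclideanSpace.volume_preserving_symm_measurableEquiv_toLp (Fin k)).measure_preimage
    hmeas.nullMeasurableSet
  rw [← h]
  have hset : (MeasurableEquiv.toLp 2 (Fin k → ℝ)).symm ⁻¹' {y | ∑ i, y i ^ 2 ≤ c}
      = closedBall (0 : EuclideanSpace ℝ (Fin k)) (Real.sqrt c) := by
    ext x
    simp only [mem_preimage, mem_setOf_eq, mem_closedBall, dist_zero_right,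
      euclid_norm_le_iff (Real.sqrt_nonneg c), Real.sq_sqrt hc]
    rfl
  rw [hset, Measure.addHaar_closedBall' _ _ (Real.sqrt_nonneg c), finrank_euclideanSpace_fin]

lemma cap_vol (m : ℕ) {R a : ℝ} (hR : 0 < R) (haR : a ≤ R) (hRa : -R ≤ a) :
    volume {x : EuclideanSpace ℝ (Fin (m + 1)) | ‖x‖ ≤ R ∧ a ≤ x 0}
      = ENNReal.ofReal (∫ t in a..R, Real.sqrt (R ^ 2 - t ^ 2) ^ m) *
          volume (closedBall (0 : EuclideanSpace ℝ (Fin m)) 1) := by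
  set S : Set (Fin (m + 1) → ℝ) := {y | a ≤ y 0 ∧ ∑ i, y i ^ 2 ≤ R ^ 2} with hS
  have hSmeas : MeasurableSet S := by
    have hA : MeasurableSet {y : Fin (m + 1) → ℝ | a ≤ y 0} :=
      measurableSet_le measurable_const (measurable_pi_apply 0)
    have hB : MeasurableSet {y : Fin (m + 1) → ℝ | ∑ i, y i ^ 2 ≤ R ^ 2} :=
      measurableSet_le (Finset.measurable_sum _ fun i _ => (measurable_pi_apply i).pow_const 2)
        measurable_const
    exact hA.inter hB
  -- step 1 : pass to pi space
  have h1 : {x : EuclideanSpace ℝ (Fin (m + 1)) | ‖x‖ ≤ R ∧ a ≤ x 0}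
      = (MeasurableEquiv.toLp 2 (Fin (m + 1) → ℝ)).symm ⁻¹' S := by
    ext x
    simp only [mem_setOf_eq, mem_preimage, hS, euclid_norm_le_iff hR.le, and_comm]
    rfl
  rw [h1, (EuclideanSpace.volume_preserving_symm_measurableEquiv_toLp (Fin (m + 1))).measure_preimage
    hSmeas.nullMeasurableSet]
  -- step 2 : split off the first coordinate
  set T : Set (ℝ × (Fin m → ℝ)) := {p | a ≤ p.1 ∧ p.1 ^ 2 + ∑ i, p.2 i ^ 2 ≤ R ^ 2} with hT
  have hTmeas : MeasurableSet T := by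
    have hA : MeasurableSet {p : ℝ × (Fin m → ℝ) | a ≤ p.1} :=
      measurableSet_le measurable_const measurable_fst
    have hB : MeasurableSet {p : ℝ × (Fin m → ℝ) | p.1 ^ 2 + ∑ i, p.2 i ^ 2 ≤ R ^ 2} :=
      measurableSet_le ((measurable_fst.pow_const 2).add
        (Finset.measurable_sum _ fun i _ =>
          ((measurable_pi_apply i).comp measurable_snd).pow_const 2)) measurable_const
    exact hA.inter hB
  have h2 : S = (MeasurableEquiv.piFinSuccAbove (fun _ => ℝ) 0) ⁻¹' T := by
    ext y
    simp only [hS, hT, mem_setOf_eq, mem_preimage, MeasurableEquiv.piFinSuccAbove_apply,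
      Fin.insertNthEquiv_symm_apply]
    rw [Fin.sum_univ_succAbove (fun i => y i ^ 2) 0]
    rfl
  rw [h2, (volume_preserving_piFinSuccAbove (fun _ : Fin (m + 1) => ℝ) 0).measure_preimage
    hTmeas.nullMeasurableSet]
  -- step 3 : Fubini
  rw [Measure.volume_eq_prod, Measure.prod_apply hTmeas]
  have h3 : (fun t : ℝ => volume (Prod.mk t ⁻¹' T))
      = (Icc a R).indicator (fun t => ENNReal.ofReal (Real.sqrt (R ^ 2 - t ^ 2) ^ m) *
          volume (closedBall (0 : EuclideanSpace ℝ (Fin m)) 1)) := by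
    funext t
    by_cases ht : t ∈ Icc a R
    · rw [indicator_of_mem ht]
      have hsub : 0 ≤ R ^ 2 - t ^ 2 := by
        have := sq_le_sq' (hRa.trans ht.1) ht.2
        linarith
      have : Prod.mk t ⁻¹' T = {y : Fin m → ℝ | ∑ i, y i ^ 2 ≤ R ^ 2 - t ^ 2} := by
        ext y
        simp only [hT, mem_preimage, mem_setOf_eq]
        constructor
        · rintro ⟨-, h⟩; linarith
        · intro h; exact ⟨ht.1, by linarith⟩
      rw [this, pi_slice_vol m hsub]
    · rw [indicator_of_notMem ht]
      have : Prod.mk t ⁻¹' T = ∅ := by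
        rw [mem_Icc, not_and_or] at ht
        ext y
        simp only [hT, mem_preimage, mem_setOf_eq, mem_empty_iff_false, iff_false, not_and]
        intro hat
        rcases ht with h | h
        · exact absurd hat h
        · push_neg at h
          have h2 : R ^ 2 < t ^ 2 := by
            apply sq_lt_sq' _ h
            linarith
          have h3 : 0 ≤ ∑ i, y i ^ 2 := Finset.sum_nonneg fun i _ => sq_nonneg _
          intro hc; linarith
      rw [this]; simp
  rw [h3, lintegral_indicator measurableSet_Icc]
  rw [lintegral_mul_const _ (by
    apply Measurable.ennreal_ofReal
    exact (Real.continuous_sqrt.comp (by continuity)).pow _ |>.measurable)]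
  congr 1
  have hcont : Continuous fun t : ℝ => Real.sqrt (R ^ 2 - t ^ 2) ^ m :=
    (Real.continuous_sqrt.comp (by continuity)).pow _
  rw [← ofReal_integral_eq_lintegral_ofReal (hcont.integrableOn_Icc)
    (ae_of_all _ fun t => by positivity)]
  rw [integral_Icc_eq_integral_Ioc, ← intervalIntegral.integral_of_le haR]

lemma subst_lemma (m : ℕ) {c : ℝ} (hc : 0 ≤ c) (hc1 : c ≤ 1) :
    ∫ s in (0:ℝ)..(1 - c ^ 2), s ^ ((m : ℝ) / 2) * (1 - s) ^ (-(1:ℝ) / 2)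
      = 2 * ∫ t in c..1, Real.sqrt (1 - t ^ 2) ^ m := by
  set g : ℝ → ℝ := fun s => s ^ ((m : ℝ) / 2) * (1 - s) ^ (-(1:ℝ) / 2) with hg
  set f : ℝ → ℝ := fun x => 1 - x ^ 2 with hf
  set f' : ℝ → ℝ := fun x => -(2 * x) with hf'
  have hptwise : ∀ x ∈ Ioc c 1, f' x • g (f x) = -2 * Real.sqrt (1 - x ^ 2) ^ m := by
    intro x hx
    have hx0 : 0 < x := lt_of_le_of_lt hc hx.1
    have h1x : 0 ≤ 1 - x ^ 2 := by nlinarith [hx.2]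
    have e1 : ((1 : ℝ) - (1 - x ^ 2)) = x ^ 2 := by ring
    have e2 : (x ^ 2 : ℝ) ^ (-(1:ℝ) / 2) = x⁻¹ := by
      rw [← Real.rpow_natCast x 2, ← Real.rpow_mul hx0.le]
      norm_num
      rw [Real.rpow_neg_one]
    have e3 : ((1 - x ^ 2 : ℝ)) ^ ((m : ℝ) / 2) = Real.sqrt (1 - x ^ 2) ^ m := by
      rw [Real.sqrt_eq_rpow, ← Real.rpow_natCast ((1 - x ^ 2) ^ ((1:ℝ)/2)) m,
        ← Real.rpow_mul h1x]
      congr 1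
      ring
    simp only [hf, hf', hg, smul_eq_mul, e1, e2, e3]
    field_simp
  have hcont : Continuous fun x : ℝ => -2 * Real.sqrt (1 - x ^ 2) ^ m := by
    apply continuous_const.mul
    exact (Real.continuous_sqrt.comp (by continuity)).pow m
  have key : (∫ x in c..1, f' x • (g ∘ f) x) = ∫ u in f c..f 1, g u := by
    apply integral_comp_smul_deriv''' (f := f) (f' := f') (g := g)
    · exact (continuous_const.sub (continuous_pow 2)).continuousOn
    · intro x hx
      rw [min_eq_left hc1, max_eq_right hc1] at hx
      have : HasDerivAt f (f' x) x := by
        simpa [hf'] using (hasDerivAt_pow 2 x).const_sub 1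
      exact this.hasDerivWithinAt
    · -- continuity of g on f '' Ioo
      rw [min_eq_left hc1, max_eq_right hc1]
      intro s hs
      obtain ⟨x, hx, rfl⟩ := hs
      have hx0 : 0 < x := lt_of_le_of_lt hc hx.1
      have hlt : f x < 1 := by simp only [hf]; nlinarith
      apply ContinuousAt.continuousWithinAt
      apply ContinuousAt.mul
      · exact Real.continuousAt_rpow_const _ _ (Or.inr (by positivity))
      · exact (Real.continuousAt_rpow_const _ _ (Or.inl (by linarith))).comp
          (continuousAt_const.sub continuousAt_id)
    · -- integrability of g on f '' uIcc
      have himg : f '' uIcc c 1 ⊆ Icc 0 1 := by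
        rintro s ⟨x, hx, rfl⟩
        rw [uIcc_of_le hc1] at hx
        constructor
        · simp only [hf]; nlinarith [hx.1, hx.2, hc.trans hx.1]
        · simp only [hf]; nlinarith [hc.trans hx.1]
      apply IntegrableOn.mono_set _ himg
      rw [← uIcc_of_le (zero_le_one (α := ℝ)), ← intervalIntegrable_iff']
      have hbase : IntervalIntegrable (fun s : ℝ => s ^ (-(1:ℝ) / 2)) volume 0 1 := by
        apply intervalIntegral.intervalIntegrable_rpow'
        norm_num
      have hrefl : IntervalIntegrable (fun s : ℝ => (1 - s) ^ (-(1:ℝ) / 2)) volume 0 1 := by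
        have := (hbase.comp_sub_left 1).symm
        simpa using this
      apply hrefl.continuousOn_mul
      intro s hs
      exact (Real.continuousAt_rpow_const _ _ (Or.inr (by positivity))).continuousWithinAt
    · -- integrability of f' • g∘f
      rw [uIcc_of_le hc1, integrableOn_Icc_iff_integrableOn_Ioc]
      apply (hcont.integrableOn_Ioc).congr_fun _ measurableSet_Ioc
      intro x hx
      exact (hptwise x hx).symm
  have lhs_eq : (∫ x in c..1, f' x • (g ∘ f) x) = -2 * ∫ t in c..1, Real.sqrt (1 - t ^ 2) ^ m := by
    rw [← intervalIntegral.integral_const_mul]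
    apply intervalIntegral.integral_congr_ae
    filter_upwards with x hx
    rw [uIoc_of_le hc1] at hx
    exact hptwise x hx
  have hfc : f c = 1 - c ^ 2 := rfl
  have hf1 : f 1 = 0 := by simp [hf]
  have hsym : (∫ u in (1 - c ^ 2)..(0:ℝ), g u) = -∫ u in (0:ℝ)..(1 - c ^ 2), g u :=
    intervalIntegral.integral_symm 0 (1 - c ^ 2)
  rw [hfc, hf1, lhs_eq, hsym] at key
  linarith [key]

lemma scale_lemma (m : ℕ) {γ ε : ℝ} (hε : 0 < ε) :
    ∫ t in γ..ε, Real.sqrt (ε ^ 2 - t ^ 2) ^ m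
      = ε ^ (m + 1) * ∫ w in (γ / ε)..1, Real.sqrt (1 - w ^ 2) ^ m := by
  have h := intervalIntegral.smul_integral_comp_mul_left
    (f := fun t => Real.sqrt (ε ^ 2 - t ^ 2) ^ m) (a := γ / ε) (b := 1) ε
  rw [mul_comm ε (γ / ε), div_mul_cancel₀ _ hε.ne', mul_one] at h
  rw [← h]
  have hfe : ∀ x : ℝ, Real.sqrt (ε ^ 2 - (ε * x) ^ 2) ^ m
      = ε ^ m * Real.sqrt (1 - x ^ 2) ^ m := by
    intro x
    have : ε ^ 2 - (ε * x) ^ 2 = ε ^ 2 * (1 - x ^ 2) := by ring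
    rw [this, Real.sqrt_mul (sq_nonneg ε), Real.sqrt_sq hε.le, mul_pow]
  simp_rw [hfe]
  rw [intervalIntegral.integral_const_mul]
  rw [smul_eq_mul]
  ring

lemma even_lemma (m : ℕ) :
    ∫ t in (-1:ℝ)..1, Real.sqrt (1 - t ^ 2) ^ m
      = 2 * ∫ t in (0:ℝ)..1, Real.sqrt (1 - t ^ 2) ^ m := by
  have hcont : Continuous fun t : ℝ => Real.sqrt (1 - t ^ 2) ^ m :=
    (Real.continuous_sqrt.comp (by continuity)).pow m
  have hsplit := intervalIntegral.integral_add_adjacent_intervals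
    (a := (-1:ℝ)) (b := 0) (c := 1) (μ := volume)
    (hcont.intervalIntegrable (-1) 0) (hcont.intervalIntegrable 0 1)
  have hneg : (∫ t in (-1:ℝ)..0, Real.sqrt (1 - t ^ 2) ^ m)
      = ∫ t in (0:ℝ)..1, Real.sqrt (1 - t ^ 2) ^ m := by
    have := intervalIntegral.integral_comp_neg
      (f := fun t => Real.sqrt (1 - t ^ 2) ^ m) (a := (0:ℝ)) (b := 1)
    simp only [neg_sq, neg_zero] at this
    exact this.symm
  linarith [hsplit, hneg]


/-- ε-VCP for linear models under uniform perturbations: the ratio of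
the volume of the spherical cap `{r : ‖r‖ ≤ ε ∧ ⟪r, u⟫ ≥ γ}` to the volume of the
shell `{r : γ ≤ ‖r‖ < ε}` equals
`(1/2) · ε^n / (ε^n − γ^n) · I(1 − (γ/ε)²; (n+1)/2, 1/2)`. -/
theorem eps_vcp_linear_uniform
    (n : ℕ) (hn : 1 ≤ n)
    (u : EuclideanSpace ℝ (Fin n)) (hu : ‖u‖ = 1)
    (γ ε : ℝ) (hγ : 0 < γ) (hγε : γ < ε) :
    (volume {r : EuclideanSpace ℝ (Fin n) | ‖r‖ ≤ ε ∧ γ ≤ ⟪r, u⟫}).toReal /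
      (volume {r : EuclideanSpace ℝ (Fin n) | γ ≤ ‖r‖ ∧ ‖r‖ < ε}).toReal
    = (1 / 2) * (ε ^ n / (ε ^ n - γ ^ n)) *
        regIncBeta (1 - (γ / ε) ^ 2) (((n : ℝ) + 1) / 2) (1 / 2) := by
  obtain ⟨m, rfl⟩ : ∃ m, n = m + 1 := ⟨n - 1, (Nat.succ_pred_eq_of_pos hn).symm⟩
  have hε : 0 < ε := hγ.trans hγε
  -- basic real quantities
  set J0 : ℝ := ∫ t in (0:ℝ)..1, Real.sqrt (1 - t ^ 2) ^ m with hJ0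
  set Jc : ℝ := ∫ t in (γ/ε)..1, Real.sqrt (1 - t ^ 2) ^ m with hJc
  have hcont : Continuous fun t : ℝ => Real.sqrt (1 - t ^ 2) ^ m :=
    (Real.continuous_sqrt.comp (by continuity)).pow m
  have hJ0pos : 0 < J0 := by
    apply intervalIntegral.intervalIntegral_pos_of_pos_on
      (hcont.intervalIntegrable 0 1)
    · intro x hx
      have h1 : 0 < 1 - x ^ 2 := by nlinarith [hx.1, hx.2]
      positivity
    · norm_num
  have hc0 : 0 ≤ γ / ε := by positivity
  have hc1 : γ / ε ≤ 1 := by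
    rw [div_le_one hε]; exact hγε.le
  -- orthonormal basis with b 0 = u
  have hcard : Module.finrank ℝ (EuclideanSpace ℝ (Fin (m+1))) = Fintype.card (Fin (m+1)) := by
    simp [finrank_euclideanSpace_fin]
  have horth : Orthonormal ℝ (Set.restrict {0} (fun _ : Fin (m+1) => u)) := by
    constructor
    · intro i; exact hu
    · intro i j hij
      exact absurd (Subsingleton.elim i j) hij
  obtain ⟨b, hb⟩ := horth.exists_orthonormalBasis_extension_of_card_eq hcard
  have hb0 : b 0 = u := hb 0 rfl
  -- cap volume
  have hcapmeas : MeasurableSet {x : EuclideanSpace ℝ (Fin (m+1)) | ‖x‖ ≤ ε ∧ γ ≤ x 0} := by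
    have h1 : MeasurableSet {x : EuclideanSpace ℝ (Fin (m+1)) | ‖x‖ ≤ ε} :=
      measurableSet_le continuous_norm.measurable measurable_const
    have h2 : MeasurableSet {x : EuclideanSpace ℝ (Fin (m+1)) | γ ≤ x 0} := by
      apply measurableSet_le measurable_const
      exact (measurable_pi_apply 0).comp
        (MeasurableEquiv.toLp 2 (Fin (m+1) → ℝ)).symm.measurable
    exact h1.inter h2
  have hcapset : {r : EuclideanSpace ℝ (Fin (m+1)) | ‖r‖ ≤ ε ∧ γ ≤ ⟪r, u⟫}
      = b.repr ⁻¹' {x : EuclideanSpace ℝ (Fin (m+1)) | ‖x‖ ≤ ε ∧ γ ≤ x 0} := by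
    ext r
    simp only [mem_setOf_eq, mem_preimage]
    rw [LinearIsometryEquiv.norm_map, OrthonormalBasis.repr_apply_apply, hb0,
      real_inner_comm]
  have hcapvol : volume {r : EuclideanSpace ℝ (Fin (m+1)) | ‖r‖ ≤ ε ∧ γ ≤ ⟪r, u⟫}
      = ENNReal.ofReal (ε ^ (m+1) * Jc) *
          volume (closedBall (0 : EuclideanSpace ℝ (Fin m)) 1) := by
    rw [hcapset, b.measurePreserving_repr.measure_preimage hcapmeas.nullMeasurableSet,
      cap_vol m hε hγε.le (by linarith), scale_lemma m hε]
  -- unit ball volume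
  have hballset : closedBall (0 : EuclideanSpace ℝ (Fin (m+1))) 1
      = {x : EuclideanSpace ℝ (Fin (m+1)) | ‖x‖ ≤ 1 ∧ (-1:ℝ) ≤ x 0} := by
    ext x
    simp only [mem_closedBall, dist_zero_right, mem_setOf_eq]
    refine ⟨fun h => ⟨h, ?_⟩, fun h => h.1⟩
    have h2 : (x 0) ^ 2 ≤ ∑ i, x i ^ 2 :=
      Finset.single_le_sum (f := fun i => x i ^ 2) (fun i _ => sq_nonneg _) (Finset.mem_univ 0)
    have h3 : ∑ i, x i ^ 2 ≤ 1 := by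
      have := (euclid_norm_le_iff zero_le_one x).mp h
      simpa using this
    nlinarith [sq_nonneg (x 0 + 1)]
  have hunitball : volume (closedBall (0 : EuclideanSpace ℝ (Fin (m+1))) 1)
      = ENNReal.ofReal (2 * J0) *
          volume (closedBall (0 : EuclideanSpace ℝ (Fin m)) 1) := by
    rw [hballset, cap_vol m one_pos (by norm_num) (by norm_num)]
    congr 2
    have : ∀ t : ℝ, Real.sqrt (1 ^ 2 - t ^ 2) ^ m = Real.sqrt (1 - t ^ 2) ^ m := by
      intro t; norm_num
    simp_rw [this]
    exact even_lemma m
  -- shell volume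
  haveI : Nontrivial (EuclideanSpace ℝ (Fin (m+1))) := by infer_instance
  have hshellset : {r : EuclideanSpace ℝ (Fin (m+1)) | γ ≤ ‖r‖ ∧ ‖r‖ < ε}
      = ball (0 : EuclideanSpace ℝ (Fin (m+1))) ε \ ball 0 γ := by
    ext r
    simp only [mem_setOf_eq, mem_diff, mem_ball_zero_iff, not_lt]
    tauto
  have hshellvol : volume {r : EuclideanSpace ℝ (Fin (m+1)) | γ ≤ ‖r‖ ∧ ‖r‖ < ε}
      = ENNReal.ofReal (ε ^ (m+1) * (2 * J0)) *
          volume (closedBall (0 : EuclideanSpace ℝ (Fin m)) 1)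
        - ENNReal.ofReal (γ ^ (m+1) * (2 * J0)) *
          volume (closedBall (0 : EuclideanSpace ℝ (Fin m)) 1) := by
    rw [hshellset, measure_diff (ball_subset_ball hγε.le)
      measurableSet_ball.nullMeasurableSet measure_ball_lt_top.ne]
    rw [Measure.addHaar_ball volume 0 hε.le, Measure.addHaar_ball volume 0 hγ.le,
      finrank_euclideanSpace_fin,
      ← Measure.addHaar_unitClosedBall_eq_addHaar_unitBall volume, hunitball,
      ← mul_assoc, ← mul_assoc, ← ENNReal.ofReal_mul (by positivity),
      ← ENNReal.ofReal_mul (by positivity)]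
  -- real versions
  set vm : ENNReal := volume (closedBall (0 : EuclideanSpace ℝ (Fin m)) 1) with hvm
  have hvmtop : vm ≠ ⊤ := measure_closedBall_lt_top.ne
  have hvmpos : 0 < vm.toReal :=
    ENNReal.toReal_pos (measure_closedBall_pos volume 0 one_pos).ne' hvmtop
  have hJcnonneg : 0 ≤ Jc :=
    intervalIntegral.integral_nonneg hc1 (fun x _ => by positivity)
  have hcapreal : (volume {r : EuclideanSpace ℝ (Fin (m+1)) | ‖r‖ ≤ ε ∧ γ ≤ ⟪r, u⟫}).toReal
      = ε ^ (m+1) * Jc * vm.toReal := by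
    rw [hcapvol, ENNReal.toReal_mul, ENNReal.toReal_ofReal (by positivity)]
  have hle : ENNReal.ofReal (γ ^ (m+1) * (2 * J0)) * vm
      ≤ ENNReal.ofReal (ε ^ (m+1) * (2 * J0)) * vm := by
    apply mul_le_mul_left
    apply ENNReal.ofReal_le_ofReal
    have : γ ^ (m+1) ≤ ε ^ (m+1) := pow_le_pow_left₀ hγ.le hγε.le _
    nlinarith
  have hshellreal : (volume {r : EuclideanSpace ℝ (Fin (m+1)) | γ ≤ ‖r‖ ∧ ‖r‖ < ε}).toReal
      = (ε ^ (m+1) - γ ^ (m+1)) * (2 * J0) * vm.toReal := by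
    rw [hshellvol, ENNReal.toReal_sub_of_le hle
      (ENNReal.mul_ne_top ENNReal.ofReal_ne_top hvmtop),
      ENNReal.toReal_mul, ENNReal.toReal_mul, ENNReal.toReal_ofReal (by positivity),
      ENNReal.toReal_ofReal (by positivity)]
    ring
  -- beta function values
  have hexp1 : (((m+1 : ℕ) : ℝ) + 1) / 2 - 1 = (m : ℝ) / 2 := by push_cast; ring
  have hexp2 : (1 : ℝ) / 2 - 1 = -(1:ℝ) / 2 := by norm_num
  have hbeta : eulerBeta ((((m+1 : ℕ) : ℝ) + 1) / 2) (1/2) = 2 * J0 := by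
    unfold eulerBeta
    rw [hexp1, hexp2]
    have h := subst_lemma m (c := 0) le_rfl zero_le_one
    norm_num at h ⊢
    convert h using 2
  have hpow : γ ^ (m+1) < ε ^ (m+1) := by
    apply pow_lt_pow_left₀ hγε hγ.le
    exact Nat.succ_ne_zero m
  have hd : ε ^ (m+1) - γ ^ (m+1) ≠ 0 := ne_of_gt (sub_pos.mpr hpow)
  rw [hcapreal, hshellreal]
  unfold regIncBeta
  rw [hbeta, hexp1, hexp2, subst_lemma m hc0 hc1]
  rw [← hJc]
  field_simp
end

section
/- (Spherical cap volume.) Let n ≥ 1, let u ∈ ℝ^n be a unit vector, and let 0 ≤ γ ≤ ε. Then the Lebesgue volume of the spherical cap {r ∈ ℝ^n : ‖r‖ ≤ ε and ⟨r, u⟩ ≥ γ} equals (1/2) · C_n · ε^n · I(1 − (γ/ε)²; (n+1)/2, 1/2), where C_n = π^(n/2) / Γ(n/2 + 1) is the volume of the unit n-ball. -/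
open RealInnerProductSpace MeasureTheory

lemma eulerBeta_eq (a b : ℝ) (ha : 0 < a) (hb : 0 < b) :
    eulerBeta a b = Real.Gamma a * Real.Gamma b / Real.Gamma (a + b) := by
  have h1 : ((eulerBeta a b : ℝ) : ℂ) = Complex.betaIntegral a b := by
    rw [eulerBeta, Complex.betaIntegral, ← intervalIntegral.integral_ofReal]
    apply intervalIntegral.integral_congr
    intro t ht
    rw [Set.uIcc_of_le (by norm_num : (0:ℝ) ≤ 1)] at ht
    simp only []
    rw [Complex.ofReal_mul, Complex.ofReal_cpow ht.1,
      Complex.ofReal_cpow (by linarith [ht.2] : (0:ℝ) ≤ 1 - t)]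
    push_cast
    ring
  have h2 := Complex.Gamma_mul_Gamma_eq_betaIntegral
      (s := (a : ℂ)) (t := (b : ℂ)) (by simpa using ha) (by simpa using hb)
  rw [← h1, ← Complex.ofReal_add, Complex.Gamma_ofReal, Complex.Gamma_ofReal,
    Complex.Gamma_ofReal, ← Complex.ofReal_mul, ← Complex.ofReal_mul] at h2
  have h3 : Real.Gamma a * Real.Gamma b = Real.Gamma (a + b) * eulerBeta a b := by
    exact_mod_cast h2
  rw [h3]
  field_simp [(Real.Gamma_pos_of_pos (by positivity)).ne']

lemma pi_ball_vol (m : ℕ) (R : ℝ) (hR : 0 ≤ R) :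
    volume {y : Fin m → ℝ | ∑ i, y i ^ 2 ≤ R}
      = ENNReal.ofReal (R ^ ((m : ℝ) / 2) * (Real.sqrt Real.pi ^ m / Real.Gamma ((m : ℝ) / 2 + 1))) := by
  rcases Nat.eq_zero_or_pos m with hm | hm
  · subst hm
    simp only [Finset.univ_eq_empty, Finset.sum_empty, hR, Set.setOf_true]
    rw [show ((0:ℕ):ℝ)/2 = 0 by norm_num]
    simp [Real.Gamma_one, MeasureTheory.volume_pi]
  · have : Nonempty (Fin m) := Fin.pos_iff_nonempty.mp hm
    have h1 : volume {y : Fin m → ℝ | ∑ i, y i ^ 2 ≤ R}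
        = volume {r : EuclideanSpace ℝ (Fin m) | ∑ i, r i ^ 2 ≤ R} := by
      rw [← (EuclideanSpace.volume_preserving_symm_measurableEquiv_toLp (Fin m)).measure_preimage]
      · rfl
      · refine (measurableSet_le (by fun_prop) measurable_const).nullMeasurableSet
    have h2 : {r : EuclideanSpace ℝ (Fin m) | ∑ i, r i ^ 2 ≤ R}
        = Metric.closedBall 0 (Real.sqrt R) := by
      ext r
      simp only [Set.mem_setOf_eq, Metric.mem_closedBall, dist_zero_right, EuclideanSpace.norm_eq]
      simp_rw [Real.norm_eq_abs, sq_abs]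
      constructor
      · intro h
        exact Real.sqrt_le_sqrt h
      · intro h
        exact Real.sqrt_le_sqrt_iff (by positivity) |>.mp h
    rw [h1, h2, EuclideanSpace.volume_closedBall]
    rw [Fintype.card_fin]
    rw [← ENNReal.ofReal_pow (Real.sqrt_nonneg R), ← ENNReal.ofReal_mul (by positivity)]
    congr 2
    rw [Real.sqrt_eq_rpow, ← Real.rpow_natCast (R ^ (1/2 : ℝ)) m, ← Real.rpow_mul hR]
    ring_nf

lemma cap_vol_slice (m : ℕ) (γ ε : ℝ) (hγ : 0 ≤ γ) (hγε : γ ≤ ε) :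
    volume {r : EuclideanSpace ℝ (Fin (m + 1)) | ‖r‖ ≤ ε ∧ γ ≤ r 0}
      = ∫⁻ x in Set.Icc γ ε,
          ENNReal.ofReal ((ε ^ 2 - x ^ 2) ^ ((m : ℝ) / 2)
            * (Real.sqrt Real.pi ^ m / Real.Gamma ((m : ℝ) / 2 + 1))) := by
  have hε : 0 ≤ ε := hγ.trans hγε
  set A : Set (Fin (m + 1) → ℝ) := {x | ∑ i, x i ^ 2 ≤ ε ^ 2 ∧ γ ≤ x 0} with hA
  have hAmeas : MeasurableSet A := by
    rw [hA, Set.setOf_and]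
    exact (measurableSet_le (by fun_prop) measurable_const).inter
      (measurableSet_le measurable_const (measurable_pi_apply 0))
  have h1 : volume {r : EuclideanSpace ℝ (Fin (m + 1)) | ‖r‖ ≤ ε ∧ γ ≤ r 0} = volume A := by
    rw [← (EuclideanSpace.volume_preserving_symm_measurableEquiv_toLp (Fin (m + 1))).measure_preimage
      hAmeas.nullMeasurableSet]
    congr 1
    ext r
    simp only [Set.mem_preimage, hA, Set.mem_setOf_eq, EuclideanSpace.norm_eq]
    have : (MeasurableEquiv.toLp 2 (Fin (m+1) → ℝ)).symm r = (r : Fin (m+1) → ℝ) := rfl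
    rw [this]
    simp_rw [Real.norm_eq_abs, sq_abs]
    constructor
    · rintro ⟨h, h2⟩
      refine ⟨?_, h2⟩
      calc ∑ i, r i ^ 2 = Real.sqrt (∑ i, r i ^ 2) ^ 2 := by
            rw [Real.sq_sqrt (by positivity)]
        _ ≤ ε ^ 2 := by apply pow_le_pow_left₀ (Real.sqrt_nonneg _) h
    · rintro ⟨h, h2⟩
      exact ⟨(Real.sqrt_le_sqrt h).trans (by rw [Real.sqrt_sq hε]), h2⟩
  set B : Set (ℝ × (Fin m → ℝ)) := {p | p.1 ^ 2 + ∑ i, p.2 i ^ 2 ≤ ε ^ 2 ∧ γ ≤ p.1} with hB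
  have hBmeas : MeasurableSet B := by
    rw [hB, Set.setOf_and]
    exact (measurableSet_le (by fun_prop) measurable_const).inter
      (measurableSet_le measurable_const measurable_fst)
  have h2 : volume A = volume B := by
    have mp := measurePreserving_piFinSuccAbove (fun _ : Fin (m + 1) => (volume : Measure ℝ)) 0
    have : A = (MeasurableEquiv.piFinSuccAbove (fun _ : Fin (m+1) => ℝ) 0) ⁻¹' B := by
      ext x
      simp only [hA, hB, Set.mem_preimage, Set.mem_setOf_eq,
        MeasurableEquiv.piFinSuccAbove_apply, Fin.insertNthEquiv, Fin.succAbove_zero]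
      rw [Fin.sum_univ_succ]
      rfl
    rw [this]
    calc volume ((MeasurableEquiv.piFinSuccAbove (fun _ : Fin (m+1) => ℝ) 0) ⁻¹' B)
        = (Measure.pi fun _ : Fin (m+1) => (volume : Measure ℝ)) ((MeasurableEquiv.piFinSuccAbove (fun _ : Fin (m+1) => ℝ) 0) ⁻¹' B) := by
          rw [MeasureTheory.volume_pi]
      _ = ((volume : Measure ℝ).prod (Measure.pi fun _ : Fin m => (volume : Measure ℝ))) B :=
          mp.measure_preimage hBmeas.nullMeasurableSet
      _ = volume B := by rw [← MeasureTheory.volume_pi, ← Measure.volume_eq_prod]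
  rw [h1, h2, Measure.volume_eq_prod, Measure.prod_apply hBmeas]
  rw [← lintegral_indicator measurableSet_Icc]
  congr 1
  ext x
  rcases le_or_gt γ x with hx1 | hx1
  · rcases le_or_gt x ε with hx2 | hx2
    · have hmem : x ∈ Set.Icc γ ε := ⟨hx1, hx2⟩
      rw [Set.indicator_of_mem hmem]
      have : Prod.mk x ⁻¹' B = {y : Fin m → ℝ | ∑ i, y i ^ 2 ≤ ε ^ 2 - x ^ 2} := by
        ext y
        simp only [hB, Set.mem_preimage, Set.mem_setOf_eq, hx1, and_true]
        constructor <;> intro h <;> linarith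
      rw [this, pi_ball_vol]
      nlinarith
    · have hmem : x ∉ Set.Icc γ ε := fun h => absurd h.2 (not_le.mpr hx2)
      rw [Set.indicator_of_notMem hmem]
      have : Prod.mk x ⁻¹' B = ∅ := by
        ext y
        simp only [hB, Set.mem_preimage, Set.mem_setOf_eq, Set.mem_empty_iff_false, iff_false]
        rintro ⟨h, -⟩
        nlinarith [Finset.sum_nonneg (fun i (_ : i ∈ Finset.univ) => sq_nonneg (y i))]
      simp [this]
  · have hmem : x ∉ Set.Icc γ ε := fun h => absurd h.1 (not_le.mpr hx1)
    rw [Set.indicator_of_notMem hmem]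
    have : Prod.mk x ⁻¹' B = ∅ := by
      ext y
      simp only [hB, Set.mem_preimage, Set.mem_setOf_eq, Set.mem_empty_iff_false, iff_false]
      rintro ⟨-, h⟩
      linarith
    simp [this]

lemma cont_rpow_half (m : ℕ) : Continuous fun y : ℝ => y ^ ((m : ℝ) / 2) := by
  rcases Nat.eq_zero_or_pos m with hm | hm
  · subst hm; simpa using continuous_const
  · refine continuous_iff_continuousAt.mpr fun y => ?_
    exact Real.continuousAt_rpow_const y _ (Or.inr (by positivity))

lemma subst_lemma_s5 (m : ℕ) (γ ε : ℝ) (hγ : 0 < γ) (hγε : γ ≤ ε) :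
    ∫ x in γ..ε, (ε ^ 2 - x ^ 2) ^ ((m : ℝ) / 2)
      = ε ^ (m + 1) / 2 *
        ∫ t in (0:ℝ)..(1 - (γ / ε) ^ 2), t ^ ((m : ℝ) / 2) * (1 - t) ^ (-(1:ℝ) / 2) := by
  have hε : 0 < ε := hγ.trans_le hγε
  set T : ℝ := 1 - (γ / ε) ^ 2 with hT
  have hq : (γ / ε) ^ 2 ≤ 1 := by
    rw [div_pow, div_le_one (by positivity)]
    nlinarith
  have hT0 : 0 ≤ T := by rw [hT]; linarith
  have hT1 : ∀ t ∈ Set.Icc (0:ℝ) T, 0 < 1 - t := by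
    intro t ht
    have h2 : (γ / ε) ^ 2 > 0 := by positivity
    have := ht.2
    simp only [hT] at this
    linarith
  have key := intervalIntegral.integral_comp_smul_deriv
    (f := fun t => ε * Real.sqrt (1 - t))
    (f' := fun t => ε * (-(1 / (2 * Real.sqrt (1 - t)))))
    (g := fun x => (ε ^ 2 - x ^ 2) ^ ((m : ℝ) / 2)) (a := (0:ℝ)) (b := T)
    (fun t ht => by
      rw [Set.uIcc_of_le hT0] at ht
      have h1t : (0:ℝ) < 1 - t := hT1 t ht
      have hsq : HasDerivAt (fun t : ℝ => Real.sqrt (1 - t)) (1 / (2 * Real.sqrt (1 - t)) * (-1)) t := by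
        exact (Real.hasDerivAt_sqrt h1t.ne').comp t (((hasDerivAt_id t).const_sub 1))
      simpa [mul_comm, neg_div] using hsq.const_mul ε)
    (by
      rw [Set.uIcc_of_le hT0]
      apply ContinuousOn.mul continuousOn_const
      apply ContinuousOn.neg
      apply ContinuousOn.div continuousOn_const
      · fun_prop
      · intro t ht
        have := hT1 t ht
        positivity)
    (by
      have := cont_rpow_half m
      fun_prop)
  simp only [Function.comp_apply, smul_eq_mul] at key
  have hg0 : ε * Real.sqrt (1 - 0) = ε := by simp
  have hgT : ε * Real.sqrt (1 - T) = γ := by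
    rw [hT]
    rw [show 1 - (1 - (γ/ε)^2) = (γ/ε)^2 by ring, Real.sqrt_sq (by positivity)]
    field_simp
  rw [hg0, hgT] at key
  have key2 : ∫ t in (0:ℝ)..T, ε * -(1 / (2 * Real.sqrt (1 - t))) *
      ((ε ^ 2 - (ε * Real.sqrt (1 - t)) ^ 2) ^ ((m : ℝ) / 2))
      = -(ε ^ (m + 1) / 2) * ∫ t in (0:ℝ)..T, t ^ ((m : ℝ) / 2) * (1 - t) ^ (-(1:ℝ) / 2) := by
    rw [← intervalIntegral.integral_const_mul]
    apply intervalIntegral.integral_congr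
    intro t ht
    rw [Set.uIcc_of_le hT0] at ht
    have h1t : (0:ℝ) < 1 - t := hT1 t ht
    have ht0 : 0 ≤ t := ht.1
    have hsq : (ε * Real.sqrt (1 - t)) ^ 2 = ε ^ 2 * (1 - t) := by
      rw [mul_pow, Real.sq_sqrt h1t.le]
    beta_reduce
    rw [hsq]
    have hbase : ε ^ 2 - ε ^ 2 * (1 - t) = ε ^ 2 * t := by ring
    rw [hbase, Real.mul_rpow (by positivity) ht0]
    have hpow : (ε ^ 2 : ℝ) ^ ((m : ℝ) / 2) = ε ^ m := by
      rw [← Real.rpow_natCast ε 2, ← Real.rpow_mul hε.le,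
        show ((2:ℕ):ℝ) * ((m:ℝ)/2) = (m:ℝ) by push_cast; ring, Real.rpow_natCast]
    rw [hpow]
    have hinv : (1 - t) ^ (-(1:ℝ) / 2) = 1 / Real.sqrt (1 - t) := by
      rw [show (-1:ℝ)/2 = -(1/2:ℝ) by norm_num, Real.rpow_neg h1t.le, Real.sqrt_eq_rpow]
      norm_num
    rw [hinv]
    have hs : Real.sqrt (1 - t) ≠ 0 := by positivity
    field_simp
    ring
  rw [key2] at key
  rw [intervalIntegral.integral_symm γ ε] at key
  linarith [key]

lemma half_ball_vol {n : ℕ} (u : EuclideanSpace ℝ (Fin n)) (hu : ‖u‖ = 1) (ε : ℝ) :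
    volume {r : EuclideanSpace ℝ (Fin n) | ‖r‖ ≤ ε ∧ 0 ≤ ⟪r, u⟫}
      = volume (Metric.closedBall (0 : EuclideanSpace ℝ (Fin n)) ε) / 2 := by
  set Sp : Set (EuclideanSpace ℝ (Fin n)) := {r | ‖r‖ ≤ ε ∧ 0 ≤ ⟪r, u⟫} with hSp
  set Sm : Set (EuclideanSpace ℝ (Fin n)) := {r | ‖r‖ ≤ ε ∧ ⟪r, u⟫ ≤ 0} with hSm
  have hci : Continuous fun r : EuclideanSpace ℝ (Fin n) => (inner ℝ r u : ℝ) := Continuous.inner continuous_id continuous_const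
  have hpc : IsClosed Sp := by
    rw [hSp, Set.setOf_and]
    exact (isClosed_le continuous_norm continuous_const).inter
      (isClosed_le continuous_const hci)
  have hmc : IsClosed Sm := by
    rw [hSm, Set.setOf_and]
    exact (isClosed_le continuous_norm continuous_const).inter
      (isClosed_le hci continuous_const)
  have hneg : volume Sm = volume Sp := by
    have : Sm = (fun r : EuclideanSpace ℝ (Fin n) => -r) ⁻¹' Sp := by
      ext r
      simp only [hSm, hSp, Set.mem_preimage, Set.mem_setOf_eq, norm_neg, inner_neg_left,
        Left.nonneg_neg_iff]
    rw [this, (Measure.measurePreserving_neg volume).measure_preimage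
      hpc.measurableSet.nullMeasurableSet]
  have hunion : Sp ∪ Sm = Metric.closedBall 0 ε := by
    ext r
    simp only [hSp, hSm, Set.mem_union, Set.mem_setOf_eq, Metric.mem_closedBall,
      dist_zero_right]
    constructor
    · rintro (⟨h, -⟩ | ⟨h, -⟩) <;> exact h
    · intro h
      rcases le_total 0 ⟪r, u⟫ with h2 | h2
      · exact Or.inl ⟨h, h2⟩
      · exact Or.inr ⟨h, h2⟩
  have hinter : volume (Sp ∩ Sm) = 0 := by
    have hu0 : u ≠ 0 := by intro h; rw [h] at hu; simp at hu
    have hsub : Sp ∩ Sm ⊆ ((ℝ ∙ u)ᗮ : Submodule ℝ (EuclideanSpace ℝ (Fin n))) := by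
      rintro r ⟨⟨-, h1⟩, ⟨-, h2⟩⟩
      rw [SetLike.mem_coe, Submodule.mem_orthogonal_singleton_iff_inner_right,
        real_inner_comm]
      linarith
    refine measure_mono_null hsub (Measure.addHaar_submodule _ _ ?_)
    intro h
    have : u ∈ (ℝ ∙ u)ᗮ := h ▸ Submodule.mem_top
    have := Submodule.mem_orthogonal_singleton_iff_inner_right.mp this
    rw [real_inner_self_eq_norm_sq, hu] at this
    norm_num at this
  have hsum := measure_union_add_inter (μ := volume) Sp hmc.measurableSet
  rw [hunion, hinter, add_zero, hneg] at hsum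
  rw [hsum, ← two_mul, mul_div_assoc, ENNReal.mul_div_cancel' (fun h => absurd h two_ne_zero)
    (fun h => absurd h ENNReal.ofNat_ne_top)]

/-- spherical cap volume: the Lebesgue volume of the spherical cap
`{r ∈ ℝ^n : ‖r‖ ≤ ε ∧ ⟪r, u⟫ ≥ γ}`, for a unit vector `u` and `0 ≤ γ ≤ ε`, equals
`(1/2) · C_n · ε^n · I(1 − (γ/ε)²; (n+1)/2, 1/2)` where `C_n = π^(n/2) / Γ(n/2 + 1)`
is the volume of the unit n-ball. -/
theorem spherical_cap_volume
    (n : ℕ) (hn : 1 ≤ n)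
    (u : EuclideanSpace ℝ (Fin n)) (hu : ‖u‖ = 1)
    (γ ε : ℝ) (hγ : 0 ≤ γ) (hγε : γ ≤ ε) :
    (volume {r : EuclideanSpace ℝ (Fin n) | ‖r‖ ≤ ε ∧ γ ≤ ⟪r, u⟫}).toReal
    = (1 / 2) * (Real.pi ^ ((n : ℝ) / 2) / Real.Gamma ((n : ℝ) / 2 + 1)) * ε ^ n *
        regIncBeta (1 - (γ / ε) ^ 2) (((n : ℝ) + 1) / 2) (1 / 2) := by
  have hε : 0 ≤ ε := hγ.trans hγε
  have ha : (0:ℝ) < ((n:ℝ) + 1) / 2 := by positivity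
  have hΓa : 0 < Real.Gamma (((n:ℝ) + 1) / 2) := Real.Gamma_pos_of_pos ha
  have hΓs : 0 < Real.Gamma ((n:ℝ) / 2 + 1) := Real.Gamma_pos_of_pos (by positivity)
  have hB : eulerBeta (((n:ℝ) + 1) / 2) (1 / 2)
      = Real.Gamma (((n:ℝ) + 1) / 2) * Real.sqrt Real.pi / Real.Gamma ((n:ℝ) / 2 + 1) := by
    rw [eulerBeta_eq _ _ ha (by norm_num), show ((n:ℝ)+1)/2 + 1/2 = (n:ℝ)/2 + 1 by ring,
      Real.Gamma_one_half_eq]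
  have hsπ : (0:ℝ) < Real.sqrt Real.pi := Real.sqrt_pos.mpr Real.pi_pos
  have hBpos : 0 < eulerBeta (((n:ℝ) + 1) / 2) (1 / 2) := by rw [hB]; positivity
  have hspn : Real.pi ^ ((n : ℝ) / 2) = Real.sqrt Real.pi ^ n := by
    rw [Real.sqrt_eq_rpow, ← Real.rpow_natCast (Real.pi ^ ((1:ℝ)/2)) n,
      ← Real.rpow_mul Real.pi_pos.le, show (1:ℝ)/2 * (n:ℝ) = (n:ℝ)/2 by ring]
  rcases eq_or_lt_of_le hγ with hγ0 | hγ0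
  · -- γ = 0 : half ball
    rw [← hγ0]
    have harg : 1 - ((0:ℝ) / ε) ^ 2 = 1 := by simp
    rw [harg]
    have hreg : regIncBeta 1 (((n:ℝ) + 1) / 2) (1 / 2) = 1 := by
      rw [regIncBeta]
      exact div_self hBpos.ne'
    rw [hreg, half_ball_vol u hu ε]
    have : Nonempty (Fin n) := Fin.pos_iff_nonempty.mp hn
    rw [EuclideanSpace.volume_closedBall, Fintype.card_fin]
    rw [ENNReal.toReal_div, ENNReal.toReal_mul, ENNReal.toReal_pow, ENNReal.toReal_ofReal hε,
      ENNReal.toReal_ofReal (by positivity), ENNReal.toReal_ofNat]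
    rw [hspn]
    field_simp
  · -- γ > 0
    obtain ⟨m, rfl⟩ : ∃ m, n = m + 1 := ⟨n - 1, (Nat.succ_pred_eq_of_pos hn).symm⟩
    set v : EuclideanSpace ℝ (Fin (m + 1)) := EuclideanSpace.single 0 1 with hv
    have hvn : ‖v‖ = 1 := by simp [hv, EuclideanSpace.norm_single]
    set f := Submodule.reflection (ℝ ∙ (u - v))ᗮ with hf
    have hfu : f u = v := Submodule.reflection_sub (by rw [hu, hvn])
    have hvr : ∀ w : EuclideanSpace ℝ (Fin (m + 1)), ⟪w, v⟫ = w 0 := by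
      intro w
      rw [hv, EuclideanSpace.inner_single_right]
      simp
    set S' : Set (EuclideanSpace ℝ (Fin (m + 1))) := {r | ‖r‖ ≤ ε ∧ γ ≤ r 0} with hS'
    have hS'meas : MeasurableSet S' := by
      rw [hS', Set.setOf_and]
      exact ((isClosed_le continuous_norm continuous_const).measurableSet).inter
        (measurableSet_le measurable_const (by
          have : Continuous fun r : EuclideanSpace ℝ (Fin (m + 1)) => r 0 := by
            exact (EuclideanSpace.proj (0 : Fin (m+1))).continuous
          exact this.measurable))
    have hpre : {r : EuclideanSpace ℝ (Fin (m + 1)) | ‖r‖ ≤ ε ∧ γ ≤ ⟪r, u⟫} = f ⁻¹' S' := by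
      ext r
      simp only [Set.mem_preimage, hS', Set.mem_setOf_eq, f.norm_map]
      rw [← hvr (f r), ← hfu, f.inner_map_map]
    have hvol : volume {r : EuclideanSpace ℝ (Fin (m + 1)) | ‖r‖ ≤ ε ∧ γ ≤ ⟪r, u⟫}
        = volume S' := by
      rw [hpre, f.measurePreserving.measure_preimage hS'meas.nullMeasurableSet]
    rw [hvol, hS', cap_vol_slice m γ ε hγ hγε]
    -- convert lintegral to interval integral
    set c : ℝ := Real.sqrt Real.pi ^ m / Real.Gamma ((m : ℝ) / 2 + 1) with hc
    have hcpos : 0 < c := by rw [hc]; positivity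
    have hcont : Continuous fun x : ℝ => (ε ^ 2 - x ^ 2) ^ ((m : ℝ) / 2) * c :=
      ((cont_rpow_half m).comp (by fun_prop)).mul continuous_const
    have hnn : ∀ x ∈ Set.Icc γ ε, 0 ≤ (ε ^ 2 - x ^ 2) ^ ((m : ℝ) / 2) * c := by
      intro x hx
      have h1 : 0 ≤ ε ^ 2 - x ^ 2 := by nlinarith [hx.1, hx.2]
      positivity
    have hlint : (∫⁻ x in Set.Icc γ ε,
        ENNReal.ofReal ((ε ^ 2 - x ^ 2) ^ ((m : ℝ) / 2) * c)).toReal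
        = ∫ x in γ..ε, (ε ^ 2 - x ^ 2) ^ ((m : ℝ) / 2) * c := by
      rw [← MeasureTheory.ofReal_integral_eq_lintegral_ofReal
        (hcont.integrableOn_Icc)
        (Filter.eventually_of_mem (self_mem_ae_restrict measurableSet_Icc) hnn)]
      rw [ENNReal.toReal_ofReal (setIntegral_nonneg measurableSet_Icc hnn)]
      rw [MeasureTheory.integral_Icc_eq_integral_Ioc, ← intervalIntegral.integral_of_le hγε]
    rw [hlint, intervalIntegral.integral_mul_const, subst_lemma_s5 m γ ε hγ0 hγε]
    -- final algebra
    rw [regIncBeta]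
    have e1 : ((↑(m+1):ℝ) + 1) / 2 - 1 = (m : ℝ) / 2 := by push_cast; ring
    have e2 : (1:ℝ) / 2 - 1 = -(1:ℝ) / 2 := by norm_num
    simp only [e1, e2]
    rw [hB]
    have hπ : Real.pi ^ ((↑(m+1) : ℝ) / 2) = Real.sqrt Real.pi ^ m * Real.sqrt Real.pi := by
      rw [hspn, pow_succ]
    rw [hπ]
    -- rewrite Gamma ((m:ℝ)/2 + 1) as Gamma (((m+1:ℝ)+1)/2)
    have e4 : (m:ℝ) / 2 + 1 = ((↑(m+1):ℝ) + 1) / 2 := by push_cast; ring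
    rw [hc, e4]
    set I := ∫ t in (0:ℝ)..(1 - (γ / ε) ^ 2), t ^ ((m:ℝ)/2) * (1 - t) ^ (-(1:ℝ)/2) with hI
    set G1 := Real.Gamma (((↑(m+1):ℝ) + 1) / 2) with hG1
    set G2 := Real.Gamma ((↑(m+1):ℝ) / 2 + 1) with hG2
    have hG2' : Real.Gamma ((↑(m+1):ℝ) / 2 + 1) = G2 := rfl
    have hG1pos : 0 < G1 := by rw [hG1]; exact Real.Gamma_pos_of_pos (by positivity)
    have hG2pos : 0 < G2 := by rw [hG2]; exact Real.Gamma_pos_of_pos (by positivity)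
    field_simp
end

section
/- Fix an integer n ≥ 2 and ε > 0, and define g : (0, ε) → ℝ by g(γ) = (1/2) · ε^n / (ε^n − γ^n) · I(1 − (γ/ε)²; (n+1)/2, 1/2). Then lim_{γ → ε⁻} g(γ) = 0. -/
open MeasureTheory Filter

open intervalIntegral Real in
lemma aux_integrable {p : ℝ} (hp : 0 ≤ p) :
    IntervalIntegrable (fun t : ℝ => t ^ p * (1 - t) ^ (-(1/2) : ℝ)) volume 0 1 := by
  have hg : IntervalIntegrable (fun t : ℝ => (1 - t) ^ (-(1/2) : ℝ)) volume 0 1 := by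
    have := (intervalIntegrable_rpow' (a := 0) (b := 1) (r := -(1/2)) (by norm_num)).comp_sub_left 1
    simpa using this.symm
  exact hg.continuousOn_mul ((Real.continuous_rpow_const hp).continuousOn)

open intervalIntegral Real in
lemma beta_pos {a : ℝ} (ha : 1 ≤ a) : 0 < eulerBeta a (1/2) := by
  unfold eulerBeta
  have h : (1/2 : ℝ) - 1 = -(1/2) := by norm_num
  rw [h]
  exact intervalIntegral_pos_of_pos_on (aux_integrable (by linarith))
    (fun t ht => mul_pos (rpow_pos_of_pos ht.1 _) (rpow_pos_of_pos (by linarith [ht.2]) _))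
    one_pos

/-- for `n ≥ 2`, with
`g(γ) = (1/2) · ε^n / (ε^n − γ^n) · I(1 − (γ/ε)²; (n+1)/2, 1/2)` on `(0, ε)`,
one has `g(γ) → 0` as `γ → ε⁻`. -/
theorem g_tendsto_zero_at_eps
    (n : ℕ) (hn : 2 ≤ n) (ε : ℝ) (hε : 0 < ε) :
    Tendsto
      (fun γ : ℝ => (1 / 2) * (ε ^ n / (ε ^ n - γ ^ n)) *
        regIncBeta (1 - (γ / ε) ^ 2) (((n : ℝ) + 1) / 2) (1 / 2))
      (nhdsWithin ε (Set.Ioo 0 ε)) (nhds 0) := by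
  have hn' : (2:ℝ) ≤ (n:ℝ) := by exact_mod_cast hn
  set a : ℝ := ((n : ℝ) + 1) / 2 with ha_def
  have ha : (3/2 : ℝ) ≤ a := by rw [ha_def]; linarith
  have hp0 : (0:ℝ) < a - 1 := by linarith
  have hB : 0 < eulerBeta a (1/2) := beta_pos (by linarith)
  set B := eulerBeta a (1/2) with hBdef
  set C : ℝ := ε^2 * (2/ε) ^ a / (2 * a * B) with hC
  have hC0 : 0 ≤ C := div_nonneg
    (mul_nonneg (sq_nonneg ε) (Real.rpow_nonneg (by positivity) a))
    (mul_nonneg (mul_nonneg two_pos.le (by linarith)) hB.le)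
  -- per-point facts
  have key : ∀ γ ∈ Set.Ioo (0:ℝ) ε,
      0 ≤ (1 / 2) * (ε ^ n / (ε ^ n - γ ^ n)) * regIncBeta (1 - (γ / ε) ^ 2) a (1 / 2) ∧
      (1 / 2) * (ε ^ n / (ε ^ n - γ ^ n)) * regIncBeta (1 - (γ / ε) ^ 2) a (1 / 2)
        ≤ C * ((ε - γ) ^ (a - 1) / γ) := by
    intro γ hγ
    obtain ⟨hγ0, hγε⟩ := hγ
    have hd : 0 < ε - γ := by linarith
    have hq : 0 < γ / ε := div_pos hγ0 hε
    have hq1 : γ / ε < 1 := (div_lt_one hε).2 hγε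
    set x : ℝ := 1 - (γ / ε) ^ 2 with hxdef
    have hx0 : 0 < x := by rw [hxdef]; nlinarith
    have hx1 : x < 1 := by rw [hxdef]; nlinarith
    have h1x : 1 - x = (γ / ε) ^ 2 := by rw [hxdef]; ring
    have hpow : γ ^ n < ε ^ n := pow_lt_pow_left₀ hγε hγ0.le (by omega)
    -- unfold regIncBeta
    have hhalf : (1/2 : ℝ) - 1 = -(1/2) := by norm_num
    rw [regIncBeta, hhalf]
    set N : ℝ := ∫ t in (0:ℝ)..x, t ^ (a - 1) * (1 - t) ^ (-(1/2):ℝ) with hNdef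
    have hN0 : 0 ≤ N := by
      rw [hNdef]
      apply intervalIntegral.integral_nonneg hx0.le
      intro u hu
      exact mul_nonneg (Real.rpow_nonneg hu.1 _)
        (Real.rpow_nonneg (by linarith [hu.2]) _)
    have hQ0 : (0:ℝ) < ε ^ n / (ε ^ n - γ ^ n) :=
      div_pos (pow_pos hε n) (by linarith)
    constructor
    · exact mul_nonneg (mul_nonneg (by norm_num) hQ0.le) (div_nonneg hN0 hB.le)
    -- bound N
    have hsub : Set.uIcc (0:ℝ) x ⊆ Set.uIcc (0:ℝ) 1 := by
      rw [Set.uIcc_of_le hx0.le, Set.uIcc_of_le zero_le_one]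
      exact Set.Icc_subset_Icc le_rfl hx1.le
    have hint1 : IntervalIntegrable (fun t : ℝ => t ^ (a-1) * (1 - t) ^ (-(1/2):ℝ))
        MeasureTheory.volume 0 x := (aux_integrable hp0.le).mono_set hsub
    have hint2 : IntervalIntegrable (fun t : ℝ => t ^ (a-1) * (1 - x) ^ (-(1/2):ℝ))
        MeasureTheory.volume 0 x :=
      ((Real.continuous_rpow_const hp0.le).mul continuous_const).intervalIntegrable _ _
    have hNle1 : N ≤ ∫ t in (0:ℝ)..x, t ^ (a-1) * (1 - x) ^ (-(1/2):ℝ) := by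
      rw [hNdef]
      apply intervalIntegral.integral_mono_on hx0.le hint1 hint2
      intro t ht
      refine mul_le_mul_of_nonneg_left ?_ (Real.rpow_nonneg ht.1 _)
      exact Real.rpow_le_rpow_of_nonpos (by linarith) (by linarith [ht.2]) (by norm_num)
    have hrint : (∫ t in (0:ℝ)..x, t ^ (a-1)) = x ^ a / a := by
      rw [integral_rpow (Or.inl (by linarith : (-1:ℝ) < a - 1))]
      rw [show a - 1 + 1 = a by ring, Real.zero_rpow (by linarith : a ≠ 0)]
      ring
    have hNle2 : N ≤ (1 - x) ^ (-(1/2):ℝ) * (x ^ a / a) := by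
      refine hNle1.trans_eq ?_
      rw [intervalIntegral.integral_mul_const, hrint, mul_comm]
    have h3 : (1 - x) ^ (-(1/2):ℝ) = ε / γ := by
      rw [h1x, ← Real.rpow_natCast (γ/ε) 2, ← Real.rpow_mul hq.le]
      norm_num [Real.rpow_neg_one, inv_div]
    have hxle : x ≤ 2/ε * (ε - γ) := by
      have h4 : 2/ε * (ε - γ) - x = (ε - γ)^2 / ε^2 := by
        rw [hxdef]; field_simp; ring
      have h5 : (0:ℝ) ≤ (ε - γ)^2 / ε^2 := by positivity
      linarith
    have hxa : x ^ a ≤ (2/ε) ^ a * (ε - γ) ^ a := by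
      calc x ^ a ≤ (2/ε * (ε - γ)) ^ a :=
            Real.rpow_le_rpow hx0.le hxle (by linarith)
        _ = (2/ε) ^ a * (ε - γ) ^ a := Real.mul_rpow (by positivity) hd.le
    have hNle : N ≤ (ε/γ) * ((2/ε) ^ a * (ε - γ) ^ a / a) := by
      refine hNle2.trans ?_
      rw [h3]
      refine mul_le_mul_of_nonneg_left ?_ (by positivity)
      exact div_le_div_of_nonneg_right hxa (by linarith)
    -- bound the prefactor
    have hden : ε ^ (n-1) * (ε - γ) ≤ ε ^ n - γ ^ n := by
      have h1 : γ ^ n ≤ ε ^ (n-1) * γ := by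
        calc γ ^ n = γ ^ (n-1) * γ := by rw [← pow_succ]; congr 1; omega
          _ ≤ ε ^ (n-1) * γ :=
            mul_le_mul_of_nonneg_right (pow_le_pow_left₀ hγ0.le hγε.le _) hγ0.le
      have h2 : ε ^ (n-1) * ε = ε ^ n := by rw [← pow_succ]; congr 1; omega
      have h6 := mul_sub (ε ^ (n-1)) ε γ
      linarith
    have hQle : ε ^ n / (ε ^ n - γ ^ n) ≤ ε / (ε - γ) := by
      have h2 : ε ^ (n-1) * ε = ε ^ n := by rw [← pow_succ]; congr 1; omega
      have h7 : ε ^ n / (ε ^ n - γ ^ n) ≤ ε ^ n / (ε ^ (n-1) * (ε - γ)) :=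
        div_le_div_of_nonneg_left (pow_pos hε n).le (by positivity) hden
      refine h7.trans_eq ?_
      rw [← h2, mul_div_mul_left _ _ (pow_pos hε (n-1)).ne']
    -- combine
    have hfinal : (1 / 2) * (ε ^ n / (ε ^ n - γ ^ n)) * (N / B)
        ≤ (1 / 2) * (ε / (ε - γ)) * (((ε/γ) * ((2/ε) ^ a * (ε - γ) ^ a / a)) / B) := by
      apply mul_le_mul
      · exact mul_le_mul_of_nonneg_left hQle (by norm_num)
      · exact div_le_div_of_nonneg_right hNle hB.le
      · exact div_nonneg hN0 hB.le
      · positivity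
    refine hfinal.trans_eq ?_
    have hsplit : (ε - γ) ^ a = (ε - γ) ^ (a - 1) * (ε - γ) := by
      conv_lhs => rw [show a = (a - 1) + 1 by ring]
      exact Real.rpow_add_one hd.ne' _
    rw [hsplit, hC]
    field_simp
  apply squeeze_zero' (g := fun γ : ℝ => C * ((ε - γ) ^ (a - 1) / γ))
  · filter_upwards [self_mem_nhdsWithin] with γ hγ
    exact (key γ hγ).1
  · filter_upwards [self_mem_nhdsWithin] with γ hγ
    exact (key γ hγ).2
  · have h1 : Tendsto (fun γ : ℝ => ε - γ) (nhdsWithin ε (Set.Ioo 0 ε)) (nhds 0) := by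
      have h : Tendsto (fun γ : ℝ => ε - γ) (nhds ε) (nhds (ε - ε)) :=
        (continuous_const.sub continuous_id).tendsto ε
      rw [sub_self] at h
      exact h.mono_left nhdsWithin_le_nhds
    have h2 : Tendsto (fun γ : ℝ => (ε - γ) ^ (a - 1)) (nhdsWithin ε (Set.Ioo 0 ε)) (nhds 0) := by
      have := h1.rpow_const (Or.inr hp0.le)
      rwa [Real.zero_rpow hp0.ne'] at this
    have h3 : Tendsto (fun γ : ℝ => γ⁻¹) (nhdsWithin ε (Set.Ioo 0 ε)) (nhds ε⁻¹) :=
      ((continuousAt_inv₀ hε.ne').tendsto.comp (continuousAt_id.tendsto)).mono_left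
        nhdsWithin_le_nhds
    have h4 := ((h2.mul h3).const_mul C)
    simp only [mul_zero, zero_mul] at h4
    simpa only [div_eq_mul_inv] using h4
end

section
/- (Monotonicity of the average ε-VCP bound.) Fix an integer n ≥ 2 and ε > 0, and define g : (0, ε) → ℝ by g(γ) = (1/2) · ε^n / (ε^n − γ^n) · I(1 − (γ/ε)²; (n+1)/2, 1/2). Then g is monotonically (strictly) decreasing on (0, ε). -/
open MeasureTheory

set_option maxHeartbeats 1000000 in
/-- monotonicity of the average ε-VCP bound: for `n ≥ 2` and `ε > 0`,
`g(γ) = (1/2) · ε^n / (ε^n − γ^n) · I(1 − (γ/ε)²; (n+1)/2, 1/2)` is strictly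
decreasing on `(0, ε)`. -/
theorem g_strictAntiOn
    (n : ℕ) (hn : 2 ≤ n) (ε : ℝ) (hε : 0 < ε) :
    StrictAntiOn
      (fun γ : ℝ => (1 / 2) * (ε ^ n / (ε ^ n - γ ^ n)) *
        regIncBeta (1 - (γ / ε) ^ 2) (((n : ℝ) + 1) / 2) (1 / 2))
      (Set.Ioo 0 ε) := by
  have hn2 : (2 : ℝ) ≤ (n : ℝ) := by exact_mod_cast hn
  set a : ℝ := ((n : ℝ) + 1) / 2 with ha
  have ha1 : 0 < a - 1 := by rw [ha]; linarith
  set f : ℝ → ℝ := fun t : ℝ => t ^ (a - 1) * (1 - t) ^ ((1 : ℝ) / 2 - 1) with hf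
  -- continuity of the integrand away from 1
  have hfc : ∀ t : ℝ, t ≠ 1 → ContinuousAt f t := by
    intro t ht
    exact (Real.continuousAt_rpow_const t _ (Or.inr ha1.le)).mul
      (((continuous_const.sub continuous_id).continuousAt).rpow_const
        (Or.inl (sub_ne_zero.mpr (Ne.symm ht))))
  have hfint : ∀ v : ℝ, 0 ≤ v → v < 1 → IntervalIntegrable f volume 0 v := by
    intro v hv0 hv1
    apply ContinuousOn.intervalIntegrable
    intro t ht
    rw [Set.uIcc_of_le hv0] at ht
    exact (hfc t (ne_of_lt (lt_of_le_of_lt ht.2 hv1))).continuousWithinAt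
  -- integrability on [0,1] and positivity of the Beta function
  have hBint : IntervalIntegrable f volume 0 1 := by
    have h1 : IntervalIntegrable (fun t : ℝ => (1 - t) ^ ((1 : ℝ) / 2 - 1)) volume 0 1 := by
      have h0 := (intervalIntegral.intervalIntegrable_rpow' (a := (1 : ℝ)) (b := 0)
        (r := (1 : ℝ) / 2 - 1) (by norm_num)).comp_sub_left 1
      norm_num at h0 ⊢
      exact h0
    exact h1.continuousOn_mul ((Real.continuous_rpow_const ha1.le).continuousOn)
  set B : ℝ := eulerBeta a (1 / 2) with hBdef
  have hB : 0 < B := by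
    rw [hBdef, eulerBeta]
    apply intervalIntegral.intervalIntegral_pos_of_pos_on hBint _ one_pos
    intro t ht
    exact mul_pos (Real.rpow_pos_of_pos ht.1 _)
      (Real.rpow_pos_of_pos (by linarith [ht.2]) _)
  have hGeq : (fun γ : ℝ => (1 / 2) * (ε ^ n / (ε ^ n - γ ^ n)) *
        regIncBeta (1 - (γ / ε) ^ 2) a (1 / 2))
      = fun γ : ℝ => (1 / 2) * (ε ^ n / (ε ^ n - γ ^ n)) *
        ((∫ t in (0 : ℝ)..(1 - (γ / ε) ^ 2), f t) / B) := rfl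
  rw [hGeq]
  -- the derivative at each point of (0, ε)
  have key : ∀ γ ∈ Set.Ioo (0 : ℝ) ε, HasDerivAt
      (fun γ : ℝ => (1 / 2) * (ε ^ n / (ε ^ n - γ ^ n)) *
        ((∫ t in (0 : ℝ)..(1 - (γ / ε) ^ 2), f t) / B))
      ((↑n * γ ^ (n - 1) * ε ^ n / (ε ^ n - γ ^ n) ^ 2) *
          ((∫ t in (0 : ℝ)..(1 - (γ / ε) ^ 2), f t) / (2 * B))
        - (ε ^ n / (ε ^ n - γ ^ n)) * (f (1 - (γ / ε) ^ 2) * γ / (ε ^ 2 * B))) γ := by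
    intro γ hγ
    obtain ⟨hγ0, hγε⟩ := hγ
    have hx0 : 0 < γ / ε := div_pos hγ0 hε
    have hx1 : γ / ε < 1 := (div_lt_one hε).mpr hγε
    have hu0 : 0 < 1 - (γ / ε) ^ 2 := by nlinarith
    have hu1 : 1 - (γ / ε) ^ 2 < 1 := by nlinarith
    have hw : 0 < ε ^ n - γ ^ n :=
      sub_pos.mpr (pow_lt_pow_left₀ hγε hγ0.le (by omega))
    have hA : HasDerivAt (fun γ : ℝ => ε ^ n / (ε ^ n - γ ^ n))
        ((0 * (ε ^ n - γ ^ n) - ε ^ n * -(↑n * γ ^ (n - 1))) / (ε ^ n - γ ^ n) ^ 2) γ :=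
      (hasDerivAt_const γ (ε ^ n)).div ((hasDerivAt_pow n γ).const_sub (ε ^ n)) hw.ne'
    have hu' : HasDerivAt (fun γ : ℝ => 1 - (γ / ε) ^ 2)
        (-(↑2 * (γ / ε) ^ (2 - 1) * (1 / ε))) γ :=
      (((hasDerivAt_id γ).div_const ε).pow 2).const_sub 1
    have hsm : StronglyMeasurableAtFilter f (nhds (1 - (γ / ε) ^ 2)) := by
      refine ⟨Set.Iio 1, Iio_mem_nhds hu1, ?_⟩
      exact ContinuousOn.aestronglyMeasurable
        (fun t ht => (hfc t (ne_of_lt ht)).continuousWithinAt) measurableSet_Iio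
    have hF : HasDerivAt (fun y : ℝ => ∫ t in (0 : ℝ)..y, f t)
        (f (1 - (γ / ε) ^ 2)) (1 - (γ / ε) ^ 2) :=
      intervalIntegral.integral_hasDerivAt_right (hfint _ hu0.le hu1) hsm (hfc _ hu1.ne)
    have hN := hF.comp γ hu'
    simp only [Function.comp_def] at hN
    have total := (hA.const_mul ((1 : ℝ) / 2)).mul (hN.div_const B)
    refine total.congr_deriv ?_
    push_cast
    field_simp
    ring
  apply strictAntiOn_of_deriv_neg (convex_Ioo 0 ε)
  · exact fun γ hγ => (key γ hγ).continuousAt.continuousWithinAt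
  · rw [interior_Ioo]
    intro γ hγ
    rw [(key γ hγ).deriv]
    obtain ⟨hγ0, hγε⟩ := hγ
    set x : ℝ := γ / ε with hxdef
    have hx0 : 0 < x := div_pos hγ0 hε
    have hx1 : x < 1 := (div_lt_one hε).mpr hγε
    have hu0 : 0 < 1 - x ^ 2 := by nlinarith
    have hu1 : 1 - x ^ 2 < 1 := by nlinarith
    have hw : 0 < ε ^ n - γ ^ n :=
      sub_pos.mpr (pow_lt_pow_left₀ hγε hγ0.le (by omega))
    set u : ℝ := 1 - x ^ 2 with hudef
    set N : ℝ := ∫ t in (0 : ℝ)..u, f t with hNdef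
    have hN : 0 < N := by
      rw [hNdef]
      apply intervalIntegral.intervalIntegral_pos_of_pos_on (hfint u hu0.le hu1) _ hu0
      intro t ht
      exact mul_pos (Real.rpow_pos_of_pos ht.1 _)
        (Real.rpow_pos_of_pos (by linarith [ht.2]) _)
    have h1u : 1 - u = x ^ 2 := by rw [hudef]; ring
    have hfu : f u = u ^ (a - 1) * x⁻¹ := by
      rw [hf]
      simp only []
      rw [h1u, ← Real.rpow_natCast x 2, ← Real.rpow_mul hx0.le,
        show (((2 : ℕ) : ℝ) * ((1 : ℝ) / 2 - 1)) = -1 by push_cast; ring,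
        Real.rpow_neg_one]
    have hfupos : 0 < f u := by
      rw [hfu]
      exact mul_pos (Real.rpow_pos_of_pos hu0 _) (inv_pos.mpr hx0)
    -- the comparison integral
    have hq : (-1 : ℝ) < ((n : ℝ) - 2) / 2 := by linarith
    have hint2 : (∫ t in (0 : ℝ)..u, (1 - t) ^ (((n : ℝ) - 2) / 2)) =
        (1 - x ^ n) * (2 / (n : ℝ)) := by
      have hcomp := intervalIntegral.integral_comp_sub_left
        (a := (0 : ℝ)) (b := u) (fun s : ℝ => s ^ (((n : ℝ) - 2) / 2)) 1
      rw [hcomp, integral_rpow (Or.inl hq)]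
      have h2 : ((n : ℝ) - 2) / 2 + 1 = (n : ℝ) / 2 := by ring
      rw [h2, sub_zero, show (1 : ℝ) - u = x ^ 2 from h1u, Real.one_rpow,
        ← Real.rpow_natCast x 2, ← Real.rpow_mul hx0.le,
        show (((2 : ℕ) : ℝ) * ((n : ℝ) / 2)) = (n : ℝ) by push_cast; ring,
        Real.rpow_natCast]
      field_simp
    have hn1 : 1 ≤ n := by omega
    have hxn1 : x ^ (n - 1) = (x ^ 2) ^ (a - 1) := by
      rw [← Real.rpow_natCast x (n - 1), ← Real.rpow_natCast x 2,
        ← Real.rpow_mul hx0.le]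
      congr 1
      rw [Nat.cast_sub hn1, ha]
      push_cast
      ring
    have keyint : (∫ t in (0 : ℝ)..u, x ^ (n - 1) * f t) <
        ∫ t in (0 : ℝ)..u, u ^ (a - 1) * (1 - t) ^ (((n : ℝ) - 2) / 2) := by
      apply intervalIntegral.integral_lt_integral_of_continuousOn_of_le_of_exists_lt hu0
      · exact continuousOn_const.mul (fun t ht =>
          (hfc t (ne_of_lt (lt_of_le_of_lt ht.2 hu1))).continuousWithinAt)
      · exact continuousOn_const.mul
          (((continuous_const.sub continuous_id).rpow_const
            (fun t => Or.inr (by linarith))).continuousOn)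
      · intro t ht
        have h1t : 0 < 1 - t := by linarith [ht.2, hu1]
        have hexp : (1 - t) ^ (((n : ℝ) - 2) / 2) =
            (1 - t) ^ (a - 1) * (1 - t) ^ ((1 : ℝ) / 2 - 1) := by
          rw [← Real.rpow_add h1t]
          congr 1
          rw [ha]; ring
        rw [hexp, hf]
        simp only []
        rw [← mul_assoc, ← mul_assoc]
        apply mul_le_mul_of_nonneg_right _ (Real.rpow_nonneg h1t.le _)
        rw [hxn1, ← Real.mul_rpow (sq_nonneg x) ht.1.le,
          ← Real.mul_rpow hu0.le h1t.le]
        apply Real.rpow_le_rpow (mul_nonneg (sq_nonneg x) ht.1.le) _ ha1.le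
        nlinarith [ht.2]
      · refine ⟨0, Set.left_mem_Icc.mpr hu0.le, ?_⟩
        rw [hf]
        simp only []
        rw [Real.zero_rpow (ne_of_gt ha1)]
        simp only [zero_mul, mul_zero, sub_zero, Real.one_rpow, mul_one]
        positivity
    -- turn it into the key inequality
    rw [intervalIntegral.integral_const_mul, intervalIntegral.integral_const_mul,
      hint2, ← hNdef] at keyint
    have hγx : γ = x * ε := by rw [hxdef]; exact (div_mul_cancel₀ γ hε.ne').symm
    have hnR : (0 : ℝ) < (n : ℝ) := by linarith
    have KI : ↑n * γ ^ (n - 1) * (ε ^ 2 * N) < 2 * γ * f u * (ε ^ n - γ ^ n) := by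
      calc ↑n * γ ^ (n - 1) * (ε ^ 2 * N)
          = (↑n * ε ^ (n + 1)) * (x ^ (n - 1) * N) := by
            rw [hγx, mul_pow, show n + 1 = 2 + (n - 1) by omega, pow_add]
            ring
        _ < (↑n * ε ^ (n + 1)) * (u ^ (a - 1) * ((1 - x ^ n) * (2 / ↑n))) := by
            apply mul_lt_mul_of_pos_left keyint (by positivity)
        _ = 2 * γ * f u * (ε ^ n - γ ^ n) := by
            rw [hfu, hγx, mul_pow]
            field_simp
            ring
    have hrw : (↑n * γ ^ (n - 1) * ε ^ n / (ε ^ n - γ ^ n) ^ 2) * (N / (2 * B))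
        - (ε ^ n / (ε ^ n - γ ^ n)) * (f u * γ / (ε ^ 2 * B))
        = (ε ^ n / (2 * B * (ε ^ n - γ ^ n) ^ 2 * ε ^ 2)) *
          (↑n * γ ^ (n - 1) * (ε ^ 2 * N) - 2 * γ * f u * (ε ^ n - γ ^ n)) := by
      field_simp
    rw [hrw]
    apply mul_neg_of_pos_of_neg
    · exact div_pos (pow_pos hε n)
        (mul_pos (mul_pos (mul_pos two_pos hB) (pow_pos hw 2)) (pow_pos hε 2))
    · exact sub_neg.mpr KI
end
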